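/- Let p ≥ 5 be a prime, let a_1, a_2, a_3, … be integers with 0 ≤ a_i ≤ p − 1 for all i ≥ 1, set α_n := Σ_{i=1}^n a_i · p^{i−1}, and let ℓ_0 ∈ ℤ. Then the set S := {n ≥ 1 : ℓ_0 ≤ α_n and α_n < p^{n−1} + ℓ_0 and a_{n+1} ≠ 0} is infinite if and only if both sets {i ≥ 1 : a_i = 0} and {i ≥ 1 : a_i ≠ 0} are infinite. -/
import Mathlib

open Finset

private lemma digit_sum_mono (p : ℕ) (a : ℕ → ℤ)
    (ha : ∀ i : ℕ, 1 ≤ i → 0 ≤ a i) {m n : ℕ} (h : m ≤ n) :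
    ∑ i ∈ range m, a (i + 1) * (p : ℤ) ^ i ≤ ∑ i ∈ range n, a (i + 1) * (p : ℤ) ^ i :=
  Finset.sum_le_sum_of_subset_of_nonneg (Finset.range_subset_range.2 h)
    (fun i _ _ => mul_nonneg (ha _ (Nat.le_add_left 1 i))
      (pow_nonneg (Nat.cast_nonneg p) i))

private lemma digit_sum_lower (p : ℕ) (a : ℕ → ℤ)
    (ha : ∀ i : ℕ, 1 ≤ i → 0 ≤ a i) {k n : ℕ} (hk1 : 1 ≤ k) (hkn : k ≤ n)
    (hak : a k ≠ 0) :
    (p : ℤ) ^ (k - 1) ≤ ∑ i ∈ range n, a (i + 1) * (p : ℤ) ^ i := by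
  obtain ⟨k', rfl⟩ : ∃ k', k = k' + 1 := ⟨k - 1, by omega⟩
  have h1 : 1 ≤ a (k' + 1) := by
    have := ha (k' + 1) (by omega)
    omega
  have hk' : k' ∈ range n := by simp; omega
  have hterm : (p : ℤ) ^ k' ≤ a (k' + 1) * (p : ℤ) ^ k' := by
    nlinarith [pow_nonneg (Nat.cast_nonneg p : (0:ℤ) ≤ p) k']
  have := Finset.single_le_sum (f := fun i => a (i + 1) * (p : ℤ) ^ i)
    (fun i _ => mul_nonneg (ha _ (Nat.le_add_left 1 i)) (pow_nonneg (Nat.cast_nonneg p) i)) hk'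
  simpa using le_trans hterm this

private lemma digit_sum_upper (p : ℕ) (hp : 2 ≤ p) (a : ℕ → ℤ)
    (ha : ∀ i : ℕ, 1 ≤ i → 0 ≤ a i ∧ a i ≤ (p : ℤ) - 1) {m n : ℕ}
    (hm1 : 1 ≤ m) (hmn : m ≤ n) (ham : a m = 0) :
    ∑ i ∈ range n, a (i + 1) * (p : ℤ) ^ i ≤ (p : ℤ) ^ n - 1 - (p : ℤ) ^ (m - 1) := by
  have hgeom : ∑ i ∈ range n, ((p : ℤ) - 1) * (p : ℤ) ^ i = (p : ℤ) ^ n - 1 := by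
    have h := geom_sum_mul (p : ℤ) n
    calc ∑ i ∈ range n, ((p : ℤ) - 1) * (p : ℤ) ^ i
        = (∑ i ∈ range n, (p : ℤ) ^ i) * ((p : ℤ) - 1) := by
          rw [Finset.sum_mul]; exact Finset.sum_congr rfl fun i _ => mul_comm _ _
      _ = (p : ℤ) ^ n - 1 := h
  have hm' : m - 1 ∈ range n := by simp; omega
  have hzero : a (m - 1 + 1) * (p : ℤ) ^ (m - 1) = 0 := by
    have h : m - 1 + 1 = m := by omega
    rw [h, ham, zero_mul]
  have e1 : ∑ i ∈ (range n).erase (m - 1), a (i + 1) * (p : ℤ) ^ i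
      = ∑ i ∈ range n, a (i + 1) * (p : ℤ) ^ i := by
    rw [← Finset.sum_erase_add _ _ hm', hzero, add_zero]
  have e2 : ∑ i ∈ (range n).erase (m - 1), ((p : ℤ) - 1) * (p : ℤ) ^ i
      = ((p : ℤ) ^ n - 1) - ((p : ℤ) - 1) * (p : ℤ) ^ (m - 1) := by
    rw [← hgeom, ← Finset.sum_erase_add (range n) _ hm']; ring
  have hle : ∑ i ∈ (range n).erase (m - 1), a (i + 1) * (p : ℤ) ^ i
      ≤ ∑ i ∈ (range n).erase (m - 1), ((p : ℤ) - 1) * (p : ℤ) ^ i := by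
    apply Finset.sum_le_sum
    intro i _
    exact mul_le_mul_of_nonneg_right (ha _ (Nat.le_add_left 1 i)).2
      (pow_nonneg (Nat.cast_nonneg p) i)
  have hpm : (p : ℤ) ^ (m - 1) ≤ ((p : ℤ) - 1) * (p : ℤ) ^ (m - 1) := by
    have hp2 : (2 : ℤ) ≤ (p : ℤ) := by exact_mod_cast hp
    nlinarith [pow_nonneg (Nat.cast_nonneg p : (0:ℤ) ≤ p) (m - 1)]
  rw [← e1]
  linarith [hle, e2.le, e2.ge]

private lemma infinite_of_forall_exists_ge {s : Set ℕ} (h : ∀ N, ∃ n ∈ s, N ≤ n) :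
    s.Infinite := by
  by_contra hfin
  rw [Set.not_infinite] at hfin
  obtain ⟨b, hb⟩ := hfin.bddAbove
  obtain ⟨n, hn, hbn⟩ := h (b + 1)
  exact absurd (hb hn) (by omega)

private lemma exists_ge_of_infinite {s : Set ℕ} (h : s.Infinite) (N : ℕ) :
    ∃ n ∈ s, N ≤ n := by
  obtain ⟨n, hn, hlt⟩ := h.exists_gt N
  exact ⟨n, hn, hlt.le⟩

/-- transition: from infinitely many zeros and nonzeros, find n ≥ N with a n = 0, a (n+1) ≠ 0 -/
private lemma exists_transition (a : ℕ → ℤ)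
    (hz : {i : ℕ | 1 ≤ i ∧ a i = 0}.Infinite)
    (hnz : {i : ℕ | 1 ≤ i ∧ a i ≠ 0}.Infinite) (N : ℕ) :
    ∃ n, N ≤ n ∧ 1 ≤ n ∧ a n = 0 ∧ a (n + 1) ≠ 0 := by
  obtain ⟨i, hi, hiN⟩ := exists_ge_of_infinite hz N
  obtain ⟨hi1, hi0⟩ := hi
  have hex : ∃ k, i < k ∧ a k ≠ 0 := by
    obtain ⟨k, hk, hik⟩ := hnz.exists_gt i
    exact ⟨k, hik, hk.2⟩
  classical
  set j := Nat.find hex with hj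
  obtain ⟨hij, haj⟩ := Nat.find_spec hex
  rcases eq_or_lt_of_le (Nat.succ_le_of_lt hij) with heq | hlt
  · exact ⟨i, hiN, hi1, hi0, by rw [show i + 1 = Nat.find hex from heq]; exact haj⟩
  · -- i + 1 < j, so j - 1 > i and a (j-1) = 0 by minimality
    have hj1 : j - 1 < j := by omega
    have hmin := Nat.find_min hex hj1
    have hij1 : i < j - 1 := by omega
    have haj1 : a (j - 1) = 0 := by
      by_contra hne
      exact hmin ⟨hij1, hne⟩
    refine ⟨j - 1, by omega, by omega, haj1, ?_⟩
    have : j - 1 + 1 = j := by omega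
    rwa [this]

/-- Let `0 ≤ a i ≤ p − 1` for `i ≥ 1` and `α_n = Σ_{i=1}^n a i · p^(i−1)`, and let
`ℓ₀ ∈ ℤ`.  The set `S = {n ≥ 1 : ℓ₀ ≤ α_n < p^(n−1) + ℓ₀ and a (n+1) ≠ 0}` is
infinite iff both `{i ≥ 1 : a i = 0}` and `{i ≥ 1 : a i ≠ 0}` are infinite. -/
theorem survivors_infinite_iff (p : ℕ) (hp : p.Prime) (hp5 : 5 ≤ p)
    (a : ℕ → ℤ) (ha : ∀ i : ℕ, 1 ≤ i → 0 ≤ a i ∧ a i ≤ (p : ℤ) - 1) (ℓ₀ : ℤ) :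
    {n : ℕ | 1 ≤ n ∧
        ℓ₀ ≤ ∑ i ∈ Finset.range n, a (i + 1) * (p : ℤ) ^ i ∧
        ∑ i ∈ Finset.range n, a (i + 1) * (p : ℤ) ^ i < (p : ℤ) ^ (n - 1) + ℓ₀ ∧
        a (n + 1) ≠ 0}.Infinite ↔
      ({i : ℕ | 1 ≤ i ∧ a i = 0}.Infinite ∧ {i : ℕ | 1 ≤ i ∧ a i ≠ 0}.Infinite) := by
  have ha0 : ∀ i : ℕ, 1 ≤ i → 0 ≤ a i := fun i hi => (ha i hi).1
  have hp2 : 2 ≤ p := by omega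
  have hp1 : (1 : ℤ) < (p : ℤ) := by exact_mod_cast (by omega : 1 < p)
  set S := {n : ℕ | 1 ≤ n ∧
        ℓ₀ ≤ ∑ i ∈ Finset.range n, a (i + 1) * (p : ℤ) ^ i ∧
        ∑ i ∈ Finset.range n, a (i + 1) * (p : ℤ) ^ i < (p : ℤ) ^ (n - 1) + ℓ₀ ∧
        a (n + 1) ≠ 0} with hS
  constructor
  · intro hSinf
    constructor
    · -- zeros infinite, by contradiction
      by_contra hzfin
      rw [Set.not_infinite] at hzfin
      obtain ⟨b, hb⟩ := hzfin.bddAbove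
      have hbig : ∀ i, b + 1 ≤ i → a i ≠ 0 := by
        intro i hi h0
        have := hb (⟨by omega, h0⟩ : i ∈ {i : ℕ | 1 ≤ i ∧ a i = 0})
        omega
      obtain ⟨n, hnS, hnN⟩ := exists_ge_of_infinite hSinf (b + 1)
      obtain ⟨m, hmS, hnm⟩ := hSinf.exists_gt n
      obtain ⟨hm1, hmlo, hmhi, _⟩ := hmS
      obtain ⟨hn1, hnlo, _, _⟩ := hnS
      obtain ⟨m', rfl⟩ : ∃ m', m = m' + 1 := ⟨m - 1, by omega⟩
      rw [Finset.sum_range_succ] at hmlo hmhi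
      have ham : 1 ≤ a (m' + 1) := by
        have h0 := ha0 (m' + 1) (by omega)
        have := hbig (m' + 1) (by omega)
        omega
      have hpow : (0:ℤ) ≤ (p:ℤ) ^ m' := pow_nonneg (Nat.cast_nonneg p) m'
      have h1 : (p:ℤ) ^ m' ≤ a (m' + 1) * (p:ℤ) ^ m' := by nlinarith
      have hsm : ∑ i ∈ Finset.range m', a (i + 1) * (p : ℤ) ^ i < ℓ₀ := by
        have : (m' + 1 - 1 : ℕ) = m' := by omega
        rw [this] at hmhi
        linarith
      have hmono := digit_sum_mono p a ha0 (show n ≤ m' from by omega)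
      linarith
    · -- nonzeros infinite: image of S under succ
      have himg : (Nat.succ '' S).Infinite :=
        hSinf.image (Set.injOn_of_injective Nat.succ_injective)
      apply himg.mono
      rintro _ ⟨n, hn, rfl⟩
      exact ⟨by omega, hn.2.2.2⟩
  · rintro ⟨hz, hnz⟩
    -- choose t with |ℓ₀| < p^t
    obtain ⟨t, ht⟩ := pow_unbounded_of_one_lt (|ℓ₀|) hp1
    -- zero digit m with p^(m-1) > |ℓ₀|
    obtain ⟨m, ⟨hm1, hm0⟩, hmt⟩ := exists_ge_of_infinite hz (t + 1)
    -- nonzero digit k with p^(k-1) > |ℓ₀|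
    obtain ⟨k, ⟨hk1, hk0⟩, hkt⟩ := exists_ge_of_infinite hnz (t + 1)
    have hpowm : |ℓ₀| < (p:ℤ) ^ (m - 1) :=
      lt_of_lt_of_le ht (pow_le_pow_right₀ (by linarith) (by omega))
    have hpowk : |ℓ₀| < (p:ℤ) ^ (k - 1) :=
      lt_of_lt_of_le ht (pow_le_pow_right₀ (by linarith) (by omega))
    apply infinite_of_forall_exists_ge
    intro N
    obtain ⟨n, hnN, hn1, han0, han1⟩ :=
      exists_transition a hz hnz (max N (max (m + 1) k))
    have hNn : N ≤ n := le_trans (le_max_left _ _) hnN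
    have hmn : m + 1 ≤ n := le_trans (le_trans (le_max_left _ _) (le_max_right N _)) hnN
    have hkn : k ≤ n := le_trans (le_trans (le_max_right _ _) (le_max_right N _)) hnN
    refine ⟨n, ⟨hn1, ?_, ?_, han1⟩, hNn⟩
    · -- lower bound
      have := digit_sum_lower p a ha0 hk1 hkn hk0
      have : ℓ₀ ≤ (p:ℤ) ^ (k - 1) := le_trans (le_abs_self _) hpowk.le
      linarith [digit_sum_lower p a ha0 hk1 hkn hk0]
    · -- upper bound
      obtain ⟨n', rfl⟩ : ∃ n', n = n' + 1 := ⟨n - 1, by omega⟩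
      rw [Finset.sum_range_succ, han0, zero_mul, add_zero]
      have hup := digit_sum_upper p hp2 a ha hm1 (show m ≤ n' from by omega) hm0
      have hnegl : -(p:ℤ) ^ (m - 1) ≤ ℓ₀ := by
        have := neg_abs_le ℓ₀
        linarith
      have : (n' + 1 - 1 : ℕ) = n' := by omega
      rw [this]
      linarith
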